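/- Let G be a group, H a normal subgroup of finite index in G, L a field, and V an L-linear representation of G. The map α : Hom_{L[H]}(L[G], V) → V ⊗_L L[G/H] defined by α(f) = Σ_{z̄ ∈ G/H} z⁻¹·f(z) ⊗ [z̄⁻¹], where z is any representative of the coset z̄, is well defined (each summand z⁻¹·f(z) ⊗ [z̄⁻¹] is independent of the choice of representative z of z̄), and α is an L-linear G-equivariant isomorphism from Hom_{L[H]}(L[G], V), equipped with the G-action (g·F)(x) = F(x·g), onto V ⊗_L L[G/H], equipped with the G-action g·(v ⊗ [x]) = (g·v) ⊗ [g·x]. -/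

import Mathlib

open scoped TensorProduct

variable {L G V : Type*} [Field L] [Group G] [AddCommGroup V] [Module L V]

/-- The coinduced module `Hom_{L[H]}(L[G], V)`: `L`-linear maps `F : L[G] → V` with
`F(h·x) = h·F(x)` for all `h ∈ H`, as a submodule of the `L`-linear maps `L[G] → V`. -/
def coind (H : Subgroup G) (ρ : Representation L (↥H) V) :
    Submodule L (MonoidAlgebra L G →ₗ[L] V) where
  carrier := {F | ∀ (h : H) (x : MonoidAlgebra L G),
    F (MonoidAlgebra.single (h : G) 1 * x) = ρ h (F x)}
  add_mem' := by
    intro a b ha hb h x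
    simp [ha h x, hb h x]
  zero_mem' := by intro h x; simp
  smul_mem' := by
    intro c F hF h x
    simp [hF h x]

/-- The action of `G` on the coinduced module, `(g·F)(x) = F(x·g)`. -/
noncomputable def coindAct (H : Subgroup G) (ρ : Representation L (↥H) V) (g : G) :
    coind H ρ →ₗ[L] coind H ρ where
  toFun F := ⟨F.1 ∘ₗ LinearMap.mulRight L (MonoidAlgebra.single g 1), by
    intro h x
    simp only [LinearMap.coe_comp, Function.comp_apply, LinearMap.mulRight_apply]
    rw [mul_assoc]
    exact F.2 h _⟩
  map_add' F₁ F₂ := Subtype.ext (LinearMap.add_comp _ _ _)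
  map_smul' c F := Subtype.ext (LinearMap.smul_comp _ _ _)

/-- The coinduced module `Hom_{L[H]}(L[G], V)` as a representation of `G`,
with the action `(g·F)(x) = F(x·g)`. -/
noncomputable def coindRep (H : Subgroup G) (ρ : Representation L (↥H) V) :
    Representation L G (coind H ρ) where
  toFun := coindAct H ρ
  map_one' := by
    refine LinearMap.ext fun F => Subtype.ext (LinearMap.ext fun x => ?_)
    simp only [coindAct, LinearMap.coe_mk, AddHom.coe_mk, LinearMap.coe_comp,
      Function.comp_apply, LinearMap.mulRight_apply, Module.End.one_apply]
    rw [← MonoidAlgebra.one_def, mul_one]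
  map_mul' g₁ g₂ := by
    refine LinearMap.ext fun F => Subtype.ext (LinearMap.ext fun x => ?_)
    simp [coindAct, MonoidAlgebra.single_mul_single, mul_assoc]

/-- The `L`-submodule of 1-cocycles of `Γ` valued in a representation `M`. -/
def Z1 {Γ M : Type*} [Group Γ] [AddCommGroup M] [Module L M]
    (ρ : Representation L Γ M) : Submodule L (Γ → M) where
  carrier := {c | ∀ γ₁ γ₂ : Γ, c (γ₁ * γ₂) = c γ₁ + ρ γ₁ (c γ₂)}
  add_mem' := by
    intro a b ha hb γ₁ γ₂
    simp only [Pi.add_apply, ha γ₁ γ₂, hb γ₁ γ₂, map_add]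
    abel
  zero_mem' := by intro γ₁ γ₂; simp
  smul_mem' := by
    intro t a ha γ₁ γ₂
    simp only [Pi.smul_apply, ha γ₁ γ₂, map_smul, smul_add]

/-- The `L`-submodule of 1-coboundaries of `Γ` valued in a representation `M`. -/
def B1 {Γ M : Type*} [Group Γ] [AddCommGroup M] [Module L M]
    (ρ : Representation L Γ M) : Submodule L (Γ → M) where
  carrier := {c | ∃ m : M, ∀ γ : Γ, c γ = ρ γ m - m}
  add_mem' := by
    rintro a b ⟨m, hm⟩ ⟨m', hm'⟩
    exact ⟨m + m', fun γ => by simp only [Pi.add_apply, hm γ, hm' γ, map_add]; abel⟩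
  zero_mem' := ⟨0, by simp⟩
  smul_mem' := by
    rintro t a ⟨m, hm⟩
    exact ⟨t • m, fun γ => by simp [hm γ, smul_sub]⟩

/-- First group cohomology `H¹(Γ, M)`: 1-cocycles modulo 1-coboundaries. -/
def H1 {Γ M : Type*} [Group Γ] [AddCommGroup M] [Module L M]
    (ρ : Representation L Γ M) :=
  ↥(Z1 ρ) ⧸ (B1 ρ).comap (Z1 ρ).subtype

section Aux
variable {L G V : Type*} [Field L] [Group G] [AddCommGroup V] [Module L V]
  (H : Subgroup G) [H.Normal] (ρ : Representation L G V)

lemma coind_single_mul {F : MonoidAlgebra L G →ₗ[L] V} (hF : F ∈ coind H (ρ.comp H.subtype))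
    (h : G) (hh : h ∈ H) (g : G) :
    F (MonoidAlgebra.single (h * g) 1) = ρ h (F (MonoidAlgebra.single g 1)) := by
  have := hF ⟨h, hh⟩ (MonoidAlgebra.single g 1)
  rwa [MonoidAlgebra.single_mul_single, one_mul] at this

lemma coind_indep {F : MonoidAlgebra L G →ₗ[L] V} (hF : F ∈ coind H (ρ.comp H.subtype))
    {z z' : G} (hzz : (z : G ⧸ H) = (z' : G ⧸ H)) :
    ρ z⁻¹ (F (MonoidAlgebra.single z 1)) = ρ z'⁻¹ (F (MonoidAlgebra.single z' 1)) := by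
  have hmem : z⁻¹ * z' ∈ H := QuotientGroup.eq.mp hzz
  have hmem' : z' * z⁻¹ ∈ H := by
    have := Subgroup.Normal.conj_mem ‹H.Normal› _ hmem z
    simpa [mul_assoc] using this
  have hz' : z' = (z' * z⁻¹) * z := by group
  rw [hz', coind_single_mul H ρ hF _ hmem', ← Module.End.mul_apply, ← map_mul]
  have : (z' * z⁻¹ * z)⁻¹ * (z' * z⁻¹) = z⁻¹ := by group
  rw [this]


/-- `eAt g (v ⊗ x) = x([g]⁻¹) • ρ g v`. -/
noncomputable def eAt (g : G) : V ⊗[L] MonoidAlgebra L (G ⧸ H) →ₗ[L] V :=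
  TensorProduct.lift
    (((((LinearMap.lsmul L V).comp
        ((Finsupp.lapply ((g : G ⧸ H)⁻¹)).comp (MonoidAlgebra.coeffLinearEquiv L).toLinearMap :
          MonoidAlgebra L (G ⧸ H) →ₗ[L] L)).flip).comp
      (ρ g : V →ₗ[L] V)))

lemma eAt_tmul (g : G) (v : V) (x : MonoidAlgebra L (G ⧸ H)) :
    eAt H ρ g (v ⊗ₜ[L] x) = x.coeff ((g : G ⧸ H)⁻¹) • ρ g v := rfl

/-- `betaLin t (single g 1) = eAt g t`. -/
noncomputable def betaLin : V ⊗[L] MonoidAlgebra L (G ⧸ H) →ₗ[L] (MonoidAlgebra L G →ₗ[L] V) :=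
  ((Finsupp.lsum L fun g : G =>
    LinearMap.toSpanSingleton L (V ⊗[L] MonoidAlgebra L (G ⧸ H) →ₗ[L] V) (eAt H ρ g)).comp
    (MonoidAlgebra.coeffLinearEquiv L).toLinearMap).flip

lemma betaLin_single (t : V ⊗[L] MonoidAlgebra L (G ⧸ H)) (g : G) :
    betaLin H ρ t (MonoidAlgebra.single g 1) = eAt H ρ g t := by
  show (Finsupp.lsum L fun g : G =>
    LinearMap.toSpanSingleton L _ (eAt H ρ g)) (Finsupp.single g 1) t = _
  rw [Finsupp.lsum_single]
  simp [LinearMap.toSpanSingleton]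

lemma betaLin_mem (t : V ⊗[L] MonoidAlgebra L (G ⧸ H)) :
    betaLin H ρ t ∈ coind H (ρ.comp H.subtype) := by
  intro h y
  -- both sides are linear in y, so reduce to y = single g c
  induction y using MonoidAlgebra.induction_linear with
  | zero => simp
  | add a b ha hb => rw [mul_add, map_add, map_add, ha, hb, map_add]
  | single g c =>
    rw [MonoidAlgebra.single_mul_single, one_mul]
    have hc : (MonoidAlgebra.single ((h : G) * g) c : MonoidAlgebra L G)
        = c • MonoidAlgebra.single ((h : G) * g) 1 := by
      rw [MonoidAlgebra.smul_single', mul_one]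
    have hc' : (MonoidAlgebra.single g c : MonoidAlgebra L G)
        = c • (MonoidAlgebra.single g 1 : MonoidAlgebra L G) := by
      rw [MonoidAlgebra.smul_single', mul_one]
    rw [hc, hc', map_smul, map_smul, map_smul, betaLin_single, betaLin_single]
    congr 1
    -- eAt (h*g) t = ρ h (eAt g t) ; prove by tensor induction
    induction t with
    | zero => simp
    | add a b ha hb => rw [map_add, map_add, ha, hb, map_add]
    | tmul v x =>
      rw [eAt_tmul, eAt_tmul]
      have hq : ((((h : G) * g : G) : G ⧸ H)) = (g : G ⧸ H) := by
        rw [QuotientGroup.mk_mul, (QuotientGroup.eq_one_iff (h : G)).mpr h.2, one_mul]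
      rw [hq, map_smul, map_mul]
      rfl

variable [Fintype (G ⧸ H)]

noncomputable def alphaMap :
    ↥(coind H (ρ.comp H.subtype)) →ₗ[L] V ⊗[L] MonoidAlgebra L (G ⧸ H) where
  toFun F := ∑ zbar : G ⧸ H,
    ρ (Quotient.out zbar)⁻¹
        ((F : MonoidAlgebra L G →ₗ[L] V) (MonoidAlgebra.single (Quotient.out zbar) 1)) ⊗ₜ[L]
      (MonoidAlgebra.single zbar⁻¹ 1 : MonoidAlgebra L (G ⧸ H))
  map_add' F F' := by
    rw [← Finset.sum_add_distrib]
    refine Finset.sum_congr rfl fun zbar _ => ?_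
    rw [← TensorProduct.add_tmul]
    simp
  map_smul' c F := by
    rw [RingHom.id_apply, Finset.smul_sum]
    refine Finset.sum_congr rfl fun zbar _ => ?_
    rw [TensorProduct.smul_tmul']
    simp

lemma alpha_beta (t : V ⊗[L] MonoidAlgebra L (G ⧸ H)) :
    alphaMap H ρ ⟨betaLin H ρ t, betaLin_mem H ρ t⟩ = t := by
  classical
  induction t with
  | zero => simp [alphaMap]
  | add a b ha hb =>
    have : (⟨betaLin H ρ (a + b), betaLin_mem H ρ _⟩ :
        ↥(coind H (ρ.comp H.subtype)))
        = ⟨betaLin H ρ a, betaLin_mem H ρ a⟩ + ⟨betaLin H ρ b, betaLin_mem H ρ b⟩ := by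
      ext; simp
    rw [this, map_add, ha, hb]
  | tmul v x =>
    show (∑ zbar : G ⧸ H, _) = v ⊗ₜ[L] x
    have key : ∀ zbar : G ⧸ H,
        ρ (Quotient.out zbar)⁻¹
          (betaLin H ρ (v ⊗ₜ[L] x) (MonoidAlgebra.single (Quotient.out zbar) 1))
        = x.coeff zbar⁻¹ • v := by
      intro zbar
      rw [betaLin_single, eAt_tmul, map_smul, ← Module.End.mul_apply, ← map_mul,
        QuotientGroup.out_eq']
      simp
    calc (∑ zbar : G ⧸ H,
          ρ (Quotient.out zbar)⁻¹
            (betaLin H ρ (v ⊗ₜ[L] x) (MonoidAlgebra.single (Quotient.out zbar) 1)) ⊗ₜ[L]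
            (MonoidAlgebra.single zbar⁻¹ 1 : MonoidAlgebra L (G ⧸ H)))
        = ∑ zbar : G ⧸ H, v ⊗ₜ[L]
            (MonoidAlgebra.single zbar⁻¹ (x.coeff zbar⁻¹) : MonoidAlgebra L (G ⧸ H)) := by
          refine Finset.sum_congr rfl fun zbar _ => ?_
          rw [key zbar, TensorProduct.smul_tmul]
          congr 1
          rw [MonoidAlgebra.smul_single', mul_one]
      _ = v ⊗ₜ[L] ∑ zbar : G ⧸ H,
            (MonoidAlgebra.single zbar⁻¹ (x.coeff zbar⁻¹) : MonoidAlgebra L (G ⧸ H)) := by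
          rw [TensorProduct.tmul_sum]
      _ = v ⊗ₜ[L] x := by
          congr 1
          ext w
          rw [MonoidAlgebra.coeff_sum, Finsupp.finset_sum_apply, Finset.sum_eq_single w⁻¹]
          · simp
          · intro b _ hb
            rw [MonoidAlgebra.coeff_single, Finsupp.single_apply, if_neg]
            exact fun hbw => hb (by rw [← hbw, inv_inv])
          · simp

lemma beta_alpha (F : ↥(coind H (ρ.comp H.subtype))) :
    betaLin H ρ (alphaMap H ρ F) = (F : MonoidAlgebra L G →ₗ[L] V) := by
  classical
  refine MonoidAlgebra.lhom_ext' fun g => LinearMap.ext fun c => ?_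
  rw [LinearMap.comp_apply, LinearMap.comp_apply, MonoidAlgebra.lsingle_apply]
  have hc : (MonoidAlgebra.single g c : MonoidAlgebra L G)
      = c • (MonoidAlgebra.single g 1 : MonoidAlgebra L G) := by
    rw [MonoidAlgebra.smul_single', mul_one]
  rw [hc, map_smul, map_smul]
  congr 1
  refine Eq.trans (betaLin_single H ρ (alphaMap H ρ F) g) ?_
  show eAt H ρ g (∑ zbar : G ⧸ H, _) = _
  rw [map_sum]
  rw [Finset.sum_eq_single ((g : G ⧸ H))]
  · rw [eAt_tmul]
    have h1 : (MonoidAlgebra.single ((g : G ⧸ H))⁻¹ 1 : MonoidAlgebra L (G ⧸ H)).coeff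
        ((g : G ⧸ H)⁻¹) = 1 := by simp
    rw [h1, one_smul]
    have := coind_indep H ρ F.2 (z := Quotient.out ((g : G ⧸ H))) (z' := g)
      (by rw [QuotientGroup.out_eq'])
    rw [this, ← Module.End.mul_apply, ← map_mul, mul_inv_cancel, map_one,
      Module.End.one_apply]
  · intro b _ hb
    rw [eAt_tmul]
    have h0 : (MonoidAlgebra.single b⁻¹ 1 : MonoidAlgebra L (G ⧸ H)).coeff ((g : G ⧸ H)⁻¹) = 0 := by
      rw [MonoidAlgebra.coeff_single, Finsupp.single_apply, if_neg]
      exact fun hbw => hb (by rw [← inv_inv b, hbw, inv_inv])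
    rw [h0, zero_smul]
  · simp

lemma alpha_equivariant (g : G) (F : ↥(coind H (ρ.comp H.subtype)))
    (act : ↥(coind H (ρ.comp H.subtype))) (hact : (act : MonoidAlgebra L G →ₗ[L] V)
      = (F : MonoidAlgebra L G →ₗ[L] V) ∘ₗ LinearMap.mulRight L (MonoidAlgebra.single g 1)) :
    alphaMap H ρ act
      = (ρ.tprod (Representation.ofMulAction L G (G ⧸ H))) g (alphaMap H ρ F) := by
  classical
  show (∑ wbar : G ⧸ H, _) = _
  have rhs : (ρ.tprod (Representation.ofMulAction L G (G ⧸ H))) g (alphaMap H ρ F)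
      = ∑ zbar : G ⧸ H,
          (ρ g) (ρ (Quotient.out zbar)⁻¹
              ((F : MonoidAlgebra L G →ₗ[L] V) (MonoidAlgebra.single (Quotient.out zbar) 1)))
            ⊗ₜ[L] (MonoidAlgebra.single ((g : G ⧸ H) * zbar⁻¹) 1 : MonoidAlgebra L (G ⧸ H)) := by
    show TensorProduct.map _ _ (∑ zbar : G ⧸ H, _) = _
    rw [map_sum]
    refine Finset.sum_congr rfl fun zbar _ => ?_
    rw [TensorProduct.map_tmul]
    congr 1
    exact Representation.ofMulAction_single g zbar⁻¹ 1
  rw [rhs]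
  refine Finset.sum_nbij' (fun wbar => wbar * (g : G ⧸ H)) (fun zbar => zbar * (g : G ⧸ H)⁻¹)
    (by simp) (by simp) (by intro a _; group) (by intro a _; group) ?_
  intro wbar _
  -- term for wbar of LHS equals term for zbar = wbar * g of RHS
  have h1 : (act : MonoidAlgebra L G →ₗ[L] V) (MonoidAlgebra.single (Quotient.out wbar) 1)
      = (F : MonoidAlgebra L G →ₗ[L] V) (MonoidAlgebra.single (Quotient.out wbar * g) 1) := by
    rw [hact]
    simp only [LinearMap.coe_comp, Function.comp_apply, LinearMap.mulRight_apply]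
    rw [MonoidAlgebra.single_mul_single, one_mul]
  rw [h1]
  have h2 : ρ (Quotient.out wbar)⁻¹
        ((F : MonoidAlgebra L G →ₗ[L] V) (MonoidAlgebra.single (Quotient.out wbar * g) 1))
      = (ρ g) (ρ (Quotient.out (wbar * (g : G ⧸ H)))⁻¹
          ((F : MonoidAlgebra L G →ₗ[L] V)
            (MonoidAlgebra.single (Quotient.out (wbar * (g : G ⧸ H))) 1))) := by
    have := coind_indep H ρ F.2 (z := Quotient.out wbar * g)
      (z' := Quotient.out (wbar * (g : G ⧸ H)))
      (by rw [QuotientGroup.mk_mul, QuotientGroup.out_eq', QuotientGroup.out_eq'])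
    rw [← this, ← Module.End.mul_apply (ρ g), ← map_mul]
    have heq : g * (Quotient.out wbar * g)⁻¹ = (Quotient.out wbar)⁻¹ := by group
    rw [heq]
  rw [h2]
  congr 2
  group

end Aux

/-- Let `G` be a group, `H` a normal subgroup of finite index, `L` a field
and `V` an `L`-linear representation of `G`. The map
`α : Hom_{L[H]}(L[G], V) → V ⊗_L L[G/H]`, `α(f) = Σ_{z̄ ∈ G/H} z⁻¹·f(z) ⊗ [z̄⁻¹]`
(`z` any representative of `z̄`), is well defined (each summand is independent of the choice
of representative) and is an `L`-linear `G`-equivariant isomorphism, where `G` acts on the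
source by `(g·F)(x) = F(x·g)` and on the target by `g·(v ⊗ [x]) = (g·v) ⊗ [g·x]`. -/
theorem coind_iso_tensor_quotient
    {L G V : Type*} [Field L] [Group G] [AddCommGroup V] [Module L V]
    (H : Subgroup G) [H.Normal] [Fintype (G ⧸ H)] (ρ : Representation L G V) :
    (∀ F ∈ coind H (ρ.comp H.subtype), ∀ (zbar : G ⧸ H) (z z' : G),
        (z : G ⧸ H) = zbar → (z' : G ⧸ H) = zbar →
        (ρ z⁻¹ (F (MonoidAlgebra.single z 1)) ⊗ₜ[L]
            (MonoidAlgebra.single zbar⁻¹ 1 : MonoidAlgebra L (G ⧸ H))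
          = ρ z'⁻¹ (F (MonoidAlgebra.single z' 1)) ⊗ₜ[L]
            (MonoidAlgebra.single zbar⁻¹ 1 : MonoidAlgebra L (G ⧸ H)))) ∧
    ∃ α : ↥(coind H (ρ.comp H.subtype)) ≃ₗ[L] V ⊗[L] MonoidAlgebra L (G ⧸ H),
      (∀ F : coind H (ρ.comp H.subtype),
          α F = ∑ zbar : G ⧸ H,
            ρ (Quotient.out zbar)⁻¹
                ((F : MonoidAlgebra L G →ₗ[L] V)
                  (MonoidAlgebra.single (Quotient.out zbar) 1)) ⊗ₜ[L]
              (MonoidAlgebra.single zbar⁻¹ 1 : MonoidAlgebra L (G ⧸ H))) ∧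
      (∀ (g : G) (F : coind H (ρ.comp H.subtype)),
          α (coindRep H (ρ.comp H.subtype) g F)
            = (ρ.tprod (Representation.ofMulAction L G (G ⧸ H))) g (α F)) := by
  classical
  constructor
  · intro F hF zbar z z' hz hz'
    have := coind_indep H ρ hF (z := z) (z' := z') (hz.trans hz'.symm)
    rw [this]
  · refine ⟨LinearEquiv.ofLinear (alphaMap H ρ)
      ((betaLin H ρ).codRestrict (coind H (ρ.comp H.subtype)) (betaLin_mem H ρ))
      ?_ ?_, fun F => rfl, fun g F => ?_⟩
    · refine LinearMap.ext fun t => ?_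
      exact alpha_beta H ρ t
    · refine LinearMap.ext fun F => Subtype.ext ?_
      simpa using beta_alpha H ρ F
    · exact alpha_equivariant H ρ g F _ rfl
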